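/- Let R = ⊕_{n≥0} R_n be a non-negatively graded commutative ring, and let (f_α)_{α∈Ω} be a family of homogeneous elements of positive degree in R indexed by a well-ordered set Ω. If (f_α)_{α∈Ω} is a regular sequence on R, then it satisfies the FR-condition: every finite subfamily f_{α₁},…,f_{α_r} with α₁ < ⋯ < α_r is a regular sequence in this order. -/

import Mathlib

noncomputable section

/-- A regular sequence indexed by an ordered set `(Ω, lt)`:  the quotient by the whole
family is nonzero and each member is a non-zerodivisor modulo the earlier members. -/
def IsRegularSeq {R : Type*} [CommRing R] {Ω : Type*} (lt : Ω → Ω → Prop) (f : Ω → R) : Prop :=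
  Ideal.span (Set.range f) ≠ ⊤ ∧
  ∀ α : Ω, ∀ h : R, h * f α ∈ Ideal.span (f '' {β | lt β α}) →
    h ∈ Ideal.span (f '' {β | lt β α})

/-- The FR-condition: every finite strictly increasing subfamily is a regular sequence
in this order. -/
def SatisfiesFR {R : Type*} [CommRing R] {Ω : Type*} (lt : Ω → Ω → Prop) (f : Ω → R) : Prop :=
  ∀ (n : ℕ) (α : Fin n → Ω), (∀ i j : Fin n, i < j → lt (α i) (α j)) →
    IsRegularSeq (· < ·) (fun i => f (α i))

open DirectSum


section Aux
variable {R : Type*} [CommRing R] (𝒜 : ℕ → AddSubmonoid R) [GradedRing 𝒜]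

lemma frAux_mem_add {I J : Ideal R} {x : R} :
    x ∈ I + J ↔ ∃ i ∈ I, ∃ j ∈ J, i + j = x := by
  rw [Submodule.add_eq_sup, Submodule.mem_sup]

lemma frAux_comp_mul_mem {I : Ideal R} (hI : I.IsHomogeneous 𝒜) {y : R} {e : ℕ} (hy : y ∈ 𝒜 e)
    {h : R} (hmem : h * y ∈ I) (n : ℕ) : (decompose 𝒜 h n : R) * y ∈ I := by
  have := hI (n + e) hmem
  rwa [coe_decompose_mul_of_right_mem_of_le 𝒜 hy (Nat.le_add_left e n), Nat.add_sub_cancel] at this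

lemma frAux_swap {I : Ideal R} (hI : I.IsHomogeneous 𝒜) {x y : R} {e e' : ℕ}
    (hx : x ∈ 𝒜 e) (he : 0 < e) (hy : y ∈ 𝒜 e')
    (Hx : ∀ h : R, h * x ∈ I → h ∈ I)
    (Hxy : ∀ h : R, h * y ∈ I + Ideal.span {x} → h ∈ I + Ideal.span {x}) :
    (∀ h : R, h * y ∈ I → h ∈ I) ∧
    (∀ h : R, h * x ∈ I + Ideal.span {y} → h ∈ I + Ideal.span {y}) := by
  have stepA : ∀ n : ℕ, ∀ c : R, c * x ^ n * y ∈ I → c * y ∈ I := by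
    intro n
    induction n with
    | zero => intro c hc; simpa using hc
    | succ n ih =>
      intro c hc
      have h1 : (c * x) * x ^ n * y ∈ I := by
        have e1 : (c * x) * x ^ n * y = c * x ^ (n+1) * y := by ring
        rw [e1]; exact hc
      have h2 : (c * y) * x ∈ I := by
        have := ih _ h1
        have e2 : (c * y) * x = (c * x) * y := by ring
        rw [e2]; exact this
      exact Hx _ h2
  have stepB : ∀ n : ℕ, ∀ h : R, h * y ∈ I → h ∈ I + Ideal.span {x ^ n} := by
    intro n
    induction n with
    | zero =>
      intro h _
      refine frAux_mem_add.mpr ⟨0, I.zero_mem, h, ?_, by ring⟩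
      simp [Ideal.mem_span_singleton]
    | succ n ih =>
      intro h hh
      obtain ⟨i, hi, z, hz, hiz⟩ := frAux_mem_add.mp (ih h hh)
      obtain ⟨c, hc⟩ := Ideal.mem_span_singleton'.mp hz
      have hcxny : c * x ^ n * y ∈ I := by
        have h3 : h * y - i * y ∈ I := I.sub_mem hh (I.mul_mem_right _ hi)
        have e3 : c * x ^ n * y = h * y - i * y := by
          rw [← hc] at hiz; linear_combination y * hiz
        rw [e3]; exact h3
      have hcy : c * y ∈ I := stepA n c hcxny
      have hcmem : c ∈ I + Ideal.span {x} :=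
        Hxy c (frAux_mem_add.mpr ⟨c * y, hcy, 0, Ideal.zero_mem _, by ring⟩)
      obtain ⟨i2, hi2, z2, hz2, hiz2⟩ := frAux_mem_add.mp hcmem
      obtain ⟨b, hb⟩ := Ideal.mem_span_singleton'.mp hz2
      refine frAux_mem_add.mpr ⟨i + i2 * x ^ n, I.add_mem hi (I.mul_mem_right _ hi2),
        b * x ^ (n+1), Ideal.mem_span_singleton'.mpr ⟨b, rfl⟩, ?_⟩
      rw [← hc] at hiz
      rw [← hb] at hiz2
      linear_combination hiz + x ^ n * hiz2
  have Hy : ∀ h : R, h * y ∈ I → h ∈ I := by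
    have hom : ∀ (d : ℕ) (h : R), h ∈ 𝒜 d → h * y ∈ I → h ∈ I := by
      intro d h hhd hhy
      obtain ⟨i, hi, z, hz, hiz⟩ := frAux_mem_add.mp (stepB (d+1) h hhy)
      obtain ⟨c, hc⟩ := Ideal.mem_span_singleton'.mp hz
      have hxp : x ^ (d+1) ∈ 𝒜 ((d+1) * e) := by
        have := SetLike.pow_mem_graded (d+1) hx
        simpa [smul_eq_mul] using this
      have hz0 : (decompose 𝒜 z d : R) = 0 := by
        rw [← hc]
        exact coe_decompose_mul_of_right_mem_of_not_le 𝒜 hxp (by nlinarith)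
      have hd : (decompose 𝒜 h d : R) = (decompose 𝒜 i d : R) := by
        rw [← hiz, decompose_add]
        simp [hz0]
      rw [← decompose_of_mem_same 𝒜 hhd, hd]
      exact hI d hi
    intro h hhy
    classical
    rw [← DirectSum.sum_support_decompose 𝒜 h]
    exact Ideal.sum_mem _ fun n _ =>
      hom n _ (SetLike.coe_mem _) (frAux_comp_mul_mem 𝒜 hI hy hhy n)
  refine ⟨Hy, ?_⟩
  intro h hh
  obtain ⟨i, hi, z, hz, hiz⟩ := frAux_mem_add.mp hh
  obtain ⟨c, hc⟩ := Ideal.mem_span_singleton'.mp hz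
  rw [← hc] at hiz
  have hcy : c * y ∈ I + Ideal.span {x} := by
    refine frAux_mem_add.mpr ⟨-i, I.neg_mem hi, h * x,
      Ideal.mem_span_singleton'.mpr ⟨h, rfl⟩, by linear_combination -hiz⟩
  obtain ⟨i2, hi2, z2, hz2, hiz2⟩ := frAux_mem_add.mp (Hxy c hcy)
  obtain ⟨b, hb⟩ := Ideal.mem_span_singleton'.mp hz2
  rw [← hb] at hiz2
  have key : (h - b * y) * x ∈ I := by
    have e4 : (h - b * y) * x = i + i2 * y := by
      linear_combination -hiz - y * hiz2
    rw [e4]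
    exact I.add_mem hi (I.mul_mem_right _ hi2)
  have := Hx _ key
  refine frAux_mem_add.mpr ⟨h - b * y, this, b * y,
    Ideal.mem_span_singleton'.mpr ⟨b, rfl⟩, by ring⟩






lemma frAux_span_homog {Ω : Type*} (f : Ω → R) (hf : ∀ β, ∃ n, f β ∈ 𝒜 n) (S : Set Ω) :
    (Ideal.span (f '' S)).IsHomogeneous 𝒜 :=
  Ideal.homogeneous_span 𝒜 _ (by rintro x ⟨β, -, rfl⟩; exact hf β)

lemma frAux_coeffs {Ω : Type*} [DecidableEq Ω] (f : Ω → R) (V : Finset Ω) {h : R}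
    (hh : h ∈ Ideal.span (f '' ↑V)) :
    ∃ c : Ω → R, h = ∑ β ∈ V, c β * f β := by
  refine Submodule.span_induction ?_ ?_ ?_ ?_ hh
  · rintro x ⟨β, hβ, rfl⟩
    refine ⟨fun δ => if δ = β then 1 else 0, ?_⟩
    have : ∀ δ ∈ V, (if δ = β then (1:R) else 0) * f δ = if δ = β then f β else 0 := by
      intro δ _; split <;> simp_all
    rw [Finset.sum_congr rfl this, Finset.sum_ite_eq' V β (fun _ => f β)]
    simp only [Finset.mem_coe] at hβ
    simp [hβ]
  · exact ⟨0, by simp⟩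
  · rintro x y - - ⟨cx, hcx⟩ ⟨cy, hcy⟩
    exact ⟨cx + cy, by simp [hcx, hcy, Finset.sum_add_distrib, add_mul]⟩
  · rintro a x - ⟨cx, hcx⟩
    exact ⟨a • cx, by simp [hcx, Finset.mul_sum, smul_eq_mul, mul_assoc]⟩


lemma frAux_coeffs_hom {Ω : Type*} [DecidableEq Ω] (f : Ω → R) (deg : Ω → ℕ)
    (hfd : ∀ β, f β ∈ 𝒜 (deg β)) (V : Finset Ω) {h : R} {d : ℕ} (hhd : h ∈ 𝒜 d)
    (hh : h ∈ Ideal.span (f '' ↑V)) :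
    ∃ c : Ω → R, (∀ β, c β = 0 ∨ (deg β ≤ d ∧ c β ∈ 𝒜 (d - deg β))) ∧
      h = ∑ β ∈ V, c β * f β := by
  classical
  obtain ⟨c, hc⟩ := frAux_coeffs f V hh
  refine ⟨fun β => if deg β ≤ d then (decompose 𝒜 (c β) (d - deg β) : R) else 0, ?_, ?_⟩
  · intro β
    by_cases hb : deg β ≤ d
    · exact Or.inr ⟨hb, by simp only [if_pos hb]; exact SetLike.coe_mem _⟩
    · exact Or.inl (by simp [hb])
  · have e1 : h = (decompose 𝒜 h d : R) := (decompose_of_mem_same 𝒜 hhd).symm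
    rw [e1, hc, ← GradedRing.proj_apply, map_sum]
    refine Finset.sum_congr rfl ?_
    intro β _
    rw [GradedRing.proj_apply]
    by_cases hb : deg β ≤ d
    · rw [coe_decompose_mul_of_right_mem_of_le 𝒜 (hfd β) hb]; simp only [if_pos hb]
    · rw [coe_decompose_mul_of_right_mem_of_not_le 𝒜 (hfd β) hb]; simp only [if_neg hb, zero_mul]

lemma frAux_exists_max {Ω : Type*} (lt : Ω → Ω → Prop) (hwo : IsWellOrder Ω lt)
    (W : Finset Ω) (hW : W.Nonempty) : ∃ m ∈ W, ∀ β ∈ W, β ≠ m → lt β m := by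
  classical
  haveI := hwo
  induction W using Finset.induction with
  | empty => exact absurd hW (by simp)
  | @insert a W ha ih =>
    by_cases hW0 : W.Nonempty
    · obtain ⟨m, hm, hmax⟩ := ih hW0
      rcases trichotomous_of lt a m with h1 | h2 | h3
      · refine ⟨m, Finset.mem_insert_of_mem hm, ?_⟩
        intro β hβ hne
        rcases Finset.mem_insert.mp hβ with rfl | hβW
        · exact h1
        · exact hmax β hβW hne
      · subst h2; exact absurd hm ha
      · refine ⟨a, Finset.mem_insert_self a W, ?_⟩
        intro β hβ hne
        rcases Finset.mem_insert.mp hβ with rfl | hβW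
        · exact absurd rfl hne
        · by_cases hβm : β = m
          · subst hβm; exact h3
          · exact _root_.trans (hmax β hβW hβm) h3
    · rw [Finset.not_nonempty_iff_eq_empty] at hW0
      subst hW0
      exact ⟨a, by simp, by intro β hβ hne; simp at hβ; exact absurd hβ hne⟩



lemma frAux_ff {Ω : Type*} (lt : Ω → Ω → Prop) (hwo : IsWellOrder Ω lt)
    (f : Ω → R) (deg : Ω → ℕ) (hdeg : ∀ β, 0 < deg β) (hfd : ∀ β, f β ∈ 𝒜 (deg β)) :
    ∀ (n : ℕ) (V : Set Ω), V.Finite → V.ncard ≤ n →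
    (∀ δ ∈ V, ∀ h : R, h * f δ ∈ Ideal.span (f '' {β | β ∈ V ∧ lt β δ}) →
        h ∈ Ideal.span (f '' {β | β ∈ V ∧ lt β δ})) →
    ∀ δ ∈ V, ∀ h : R, h * f δ ∈ Ideal.span (f '' (V \ {δ})) →
        h ∈ Ideal.span (f '' (V \ {δ})) := by
  haveI := hwo
  intro n
  induction n with
  | zero =>
    intro V hfin hcard CR δ hδ
    have hV0 : V = ∅ := (Set.ncard_eq_zero hfin).mp (le_antisymm hcard (Nat.zero_le _))
    rw [hV0] at hδ
    exact absurd hδ (Set.notMem_empty δ)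
  | succ n ih =>
    intro V hfin hcard CR δ hδ
    obtain ⟨m, hmW, hmax⟩ := frAux_exists_max lt hwo hfin.toFinset ⟨δ, hfin.mem_toFinset.mpr hδ⟩
    rw [Set.Finite.mem_toFinset] at hmW
    have hmax' : ∀ β ∈ V, β ≠ m → lt β m := fun β hβ =>
      hmax β (hfin.mem_toFinset.mpr hβ)
    have hirr : ∀ a : Ω, ¬ lt a a := fun a => irrefl_of lt a
    have hset_m : {β | β ∈ V ∧ lt β m} = V \ {m} := by
      ext β
      constructor
      · rintro ⟨h1, h2⟩; exact ⟨h1, fun he => (hirr m) (by rwa [he] at h2)⟩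
      · rintro ⟨h1, h2⟩; exact ⟨h1, hmax' β h1 h2⟩
    by_cases hδm : δ = m
    · subst hδm
      intro h hh
      have := CR δ hδ h (by rwa [hset_m])
      rwa [hset_m] at this
    · have hδV' : δ ∈ V \ {m} := ⟨hδ, hδm⟩
      have CR' : ∀ δ' ∈ V \ {m}, ∀ h : R,
          h * f δ' ∈ Ideal.span (f '' {β | β ∈ V \ {m} ∧ lt β δ'}) →
          h ∈ Ideal.span (f '' {β | β ∈ V \ {m} ∧ lt β δ'}) := by
        intro δ' hδ' h
        have hsets : {β | β ∈ V \ {m} ∧ lt β δ'} = {β | β ∈ V ∧ lt β δ'} := by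
          ext β
          constructor
          · rintro ⟨⟨h1, _⟩, h2⟩; exact ⟨h1, h2⟩
          · rintro ⟨h1, h2⟩
            refine ⟨⟨h1, fun hbm => ?_⟩, h2⟩
            rw [hbm] at h2
            exact hirr m (trans_of lt h2 (hmax' δ' hδ'.1 hδ'.2))
        rw [hsets]
        exact CR δ' hδ'.1 h
      have hcard' : (V \ {m}).ncard ≤ n := by
        have := Set.ncard_diff_singleton_add_one hmW hfin
        omega
      have IH := ih (V \ {m}) hfin.diff hcard' CR' δ hδV'
      have hI : (Ideal.span (f '' (V \ {δ, m}))).IsHomogeneous 𝒜 :=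
        frAux_span_homog 𝒜 f (fun β => ⟨deg β, hfd β⟩) _
      have hsub1 : (V \ {m}) \ {δ} = V \ {δ, m} := by
        ext β
        simp only [Set.mem_diff, Set.mem_singleton_iff, Set.mem_insert_iff]
        tauto
      have hadd1 : Ideal.span (f '' (V \ {δ, m})) + Ideal.span {f δ}
          = Ideal.span (f '' (V \ {m})) := by
        rw [Submodule.add_eq_sup, ← Ideal.span_union, ← Set.image_singleton, ← Set.image_union]
        have : (V \ {δ, m}) ∪ {δ} = V \ {m} := by
          ext β
          simp only [Set.mem_union, Set.mem_diff, Set.mem_singleton_iff, Set.mem_insert_iff]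
          constructor
          · rintro (⟨h1, h2⟩ | rfl)
            · exact ⟨h1, fun hm => h2 (Or.inr hm)⟩
            · exact ⟨hδ, hδm⟩
          · rintro ⟨h1, h2⟩
            by_cases hb : β = δ
            · exact Or.inr hb
            · exact Or.inl ⟨h1, by tauto⟩
        rw [this]
      have hadd2 : Ideal.span (f '' (V \ {δ, m})) + Ideal.span {f m}
          = Ideal.span (f '' (V \ {δ})) := by
        rw [Submodule.add_eq_sup, ← Ideal.span_union, ← Set.image_singleton, ← Set.image_union]
        have : (V \ {δ, m}) ∪ {m} = V \ {δ} := by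
          ext β
          simp only [Set.mem_union, Set.mem_diff, Set.mem_singleton_iff, Set.mem_insert_iff]
          constructor
          · rintro (⟨h1, h2⟩ | rfl)
            · exact ⟨h1, fun hm => h2 (Or.inl hm)⟩
            · exact ⟨hmW, fun he => hδm he.symm⟩
          · rintro ⟨h1, h2⟩
            by_cases hb : β = m
            · exact Or.inr hb
            · exact Or.inl ⟨h1, by tauto⟩
        rw [this]
      have Hx : ∀ h : R, h * f δ ∈ Ideal.span (f '' (V \ {δ, m})) →
          h ∈ Ideal.span (f '' (V \ {δ, m})) := by
        rw [← hsub1]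
        exact IH
      have Hxy : ∀ h : R, h * f m ∈ Ideal.span (f '' (V \ {δ, m})) + Ideal.span {f δ} →
          h ∈ Ideal.span (f '' (V \ {δ, m})) + Ideal.span {f δ} := by
        rw [hadd1, ← hset_m]
        exact CR m hmW
      have := (frAux_swap 𝒜 hI (hfd δ) (hdeg δ) (hfd m) Hx Hxy).2
      rw [hadd2] at this
      exact this

lemma frAux_main {Ω : Type*} (lt : Ω → Ω → Prop) (hwo : IsWellOrder Ω lt)
    (f : Ω → R) (deg : Ω → ℕ) (hdeg : ∀ β, 0 < deg β) (hfd : ∀ β, f β ∈ 𝒜 (deg β))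
    (hreg2 : ∀ α : Ω, ∀ h : R, h * f α ∈ Ideal.span (f '' {β | lt β α}) →
      h ∈ Ideal.span (f '' {β | lt β α})) :
    ∀ γ : Ω, ∀ U : Set Ω, U.Finite → (∀ β ∈ U, lt β γ) →
      ∀ h : R, h * f γ ∈ Ideal.span (f '' U) → h ∈ Ideal.span (f '' U) := by
  haveI := hwo
  classical
  intro γ
  refine IsWellFounded.induction lt (motive := fun γ => ∀ U : Set Ω, U.Finite →
    (∀ β ∈ U, lt β γ) → ∀ h : R, h * f γ ∈ Ideal.span (f '' U) →
    h ∈ Ideal.span (f '' U)) γ ?_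
  clear γ
  intro γ IH
  -- homogeneous case with strong induction on degree
  have Q : ∀ d : ℕ, ∀ U : Set Ω, U.Finite → (∀ β ∈ U, lt β γ) → ∀ h : R, h ∈ 𝒜 d →
      h * f γ ∈ Ideal.span (f '' U) → h ∈ Ideal.span (f '' U) := by
    intro d
    induction d using Nat.strong_induction_on with
    | _ d IHd =>
    -- the inner elimination induction
    have inner : ∀ (k : ℕ) (W : Finset Ω), W.card ≤ k → (∀ δ ∈ W, lt δ γ) →
        ∀ U : Set Ω, U.Finite → (∀ β ∈ U, lt β γ) → (∀ δ ∈ W, δ ∉ U) →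
        ∀ b : Ω → R, (∀ δ ∈ W, b δ = 0 ∨ (deg δ ≤ d ∧ b δ ∈ 𝒜 (d - deg δ))) →
        ∀ u ∈ Ideal.span (f '' U),
        (u + ∑ δ ∈ W, b δ * f δ) * f γ ∈ Ideal.span (f '' U) →
        (u + ∑ δ ∈ W, b δ * f δ) ∈ Ideal.span (f '' U) := by
      intro k
      induction k with
      | zero =>
        intro W hWcard _ U _ _ _ b _ u hu _
        have : W = ∅ := Finset.card_eq_zero.mp (le_antisymm hWcard (Nat.zero_le _))
        subst this
        simpa using hu
      | succ k ihk =>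
        intro W hWcard hWlt U hUfin hUlt hWU b hbprop u hu hmul
        by_cases hWne : W.Nonempty
        · obtain ⟨δ', hδ'W, hδ'max⟩ := frAux_exists_max lt hwo W hWne
          set W' : Finset Ω := W.erase δ' with hW'
          have hW'card : W'.card ≤ k := by
            have h1 : W'.card = W.card - 1 := by
              rw [hW']
              exact Finset.card_erase_of_mem hδ'W
            have h2 : 0 < W.card := Finset.card_pos.mpr hWne
            omega
          have hW'sub : ∀ δ ∈ W', δ ∈ W := fun δ hδ => Finset.mem_of_mem_erase hδ
          have hsplit : ∑ δ ∈ W, b δ * f δ = b δ' * f δ' + ∑ δ ∈ W', b δ * f δ :=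
            (Finset.add_sum_erase W (fun δ => b δ * f δ) hδ'W).symm
          set E : Set Ω := U ∪ ↑W' with hE
          have hEfin : E.Finite := hUfin.union W'.finite_toSet
          have hElt : ∀ β ∈ E, lt β γ := by
            rintro β (hβ | hβ)
            · exact hUlt β hβ
            · exact hWlt β (hW'sub β hβ)
          have hUE : Ideal.span (f '' U) ≤ Ideal.span (f '' E) :=
            Ideal.span_mono (Set.image_mono Set.subset_union_left)
          -- key membership
          have hsum2 : (∑ δ ∈ W', b δ * f δ) * f γ = ∑ δ ∈ W', (b δ * f γ) * f δ := by
            rw [Finset.sum_mul]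
            exact Finset.sum_congr rfl fun δ _ => by ring
          have hkey : (b δ' * f γ) * f δ' ∈ Ideal.span (f '' E) := by
            have t1 : (u + ∑ δ ∈ W, b δ * f δ) * f γ ∈ Ideal.span (f '' E) := hUE hmul
            have t2 : u * f γ ∈ Ideal.span (f '' E) :=
              Ideal.mul_mem_right _ _ (hUE hu)
            have t3 : ∑ δ ∈ W', (b δ * f γ) * f δ ∈ Ideal.span (f '' E) :=
              Ideal.sum_mem _ fun δ hδ => Ideal.mul_mem_left _ _
                (Ideal.subset_span ⟨δ, Or.inr hδ, rfl⟩)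
            have heq : (b δ' * f γ) * f δ' =
                (u + ∑ δ ∈ W, b δ * f δ) * f γ - u * f γ -
                  ∑ δ ∈ W', (b δ * f γ) * f δ := by
              rw [← hsum2, hsplit]
              ring
            rw [heq]
            exact Ideal.sub_mem _ (Ideal.sub_mem _ t1 t2) t3
          -- chain regularity of U ∪ W and the finite fact
          have hVfin : (U ∪ ↑W : Set Ω).Finite := hUfin.union W.finite_toSet
          have CRV : ∀ δ ∈ (U ∪ ↑W : Set Ω), ∀ h : R,
              h * f δ ∈ Ideal.span (f '' {β | β ∈ (U ∪ ↑W : Set Ω) ∧ lt β δ}) →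
              h ∈ Ideal.span (f '' {β | β ∈ (U ∪ ↑W : Set Ω) ∧ lt β δ}) := by
            intro δ hδ h hmem
            have hδγ : lt δ γ := by
              rcases hδ with hδ | hδ
              · exact hUlt δ hδ
              · exact hWlt δ hδ
            exact IH δ hδγ _ (hVfin.subset fun β hβ => hβ.1) (fun β hβ => hβ.2) h hmem
          have hδ'V : δ' ∈ (U ∪ ↑W : Set Ω) := Or.inr hδ'W
          have hEeq : (U ∪ ↑W : Set Ω) \ {δ'} = E := by
            ext β
            simp only [hE, hW', Set.mem_diff, Set.mem_union, Set.mem_singleton_iff,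
              Finset.coe_erase, Finset.mem_coe, Finset.mem_erase]
            have hd' : δ' ∉ U := hWU δ' hδ'W
            constructor
            · rintro ⟨hβ | hβ, hne⟩
              · exact Or.inl hβ
              · tauto
            · intro hx
              rcases hx with hβ | hx
              · exact ⟨Or.inl hβ, fun he => hd' (by rwa [he] at hβ)⟩
              · tauto
          have hffres : b δ' * f γ ∈ Ideal.span (f '' E) := by
            have := frAux_ff 𝒜 lt hwo f deg hdeg hfd (U ∪ ↑W : Set Ω).ncard
              (U ∪ ↑W) hVfin le_rfl CRV δ' hδ'V (b δ' * f γ) (by rwa [hEeq])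
            rwa [hEeq] at this
          -- case split on b δ'
          rcases hbprop δ' hδ'W with hb0 | ⟨hdle, hbmem⟩
          · -- b δ' = 0 : drop δ' directly
            have hzero : ∑ δ ∈ W, b δ * f δ = ∑ δ ∈ W', b δ * f δ := by
              rw [hsplit, hb0, zero_mul, zero_add]
            rw [hzero] at hmul ⊢
            exact ihk W' hW'card (fun δ hδ => hWlt δ (hW'sub δ hδ)) U hUfin hUlt
              (fun δ hδ => hWU δ (hW'sub δ hδ)) b
              (fun δ hδ => hbprop δ (hW'sub δ hδ)) u hu hmul
          · -- b δ' homogeneous of degree d - deg δ' < d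
            have hdlt : d - deg δ' < d := by
              have := hdeg δ'
              omega
            have hbE : b δ' ∈ Ideal.span (f '' E) :=
              IHd _ hdlt E hEfin hElt _ hbmem hffres
            -- coefficients for b δ'
            have hcoe : (↑(hUfin.toFinset ∪ W') : Set Ω) = E := by
              rw [Finset.coe_union, Set.Finite.coe_toFinset]
            obtain ⟨e, heprop, heeq⟩ := frAux_coeffs_hom 𝒜 f deg hfd
              (hUfin.toFinset ∪ W') hbmem (by rwa [hcoe])
            have hdisj : Disjoint hUfin.toFinset W' := by
              rw [Finset.disjoint_left]
              intro a haU haW'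
              exact hWU a (hW'sub a haW') (hUfin.mem_toFinset.mp haU)
            have heeq2 : b δ' = (∑ β ∈ hUfin.toFinset, e β * f β) +
                ∑ β ∈ W', e β * f β := by
              rw [heeq, Finset.sum_union hdisj]
            set u' : R := u + (∑ β ∈ hUfin.toFinset, e β * f β) * f δ' with hu'def
            have hu' : u' ∈ Ideal.span (f '' U) := by
              refine Ideal.add_mem _ hu (Ideal.mul_mem_right _ _ (Ideal.sum_mem _ ?_))
              intro β hβ
              exact Ideal.mul_mem_left _ _
                (Ideal.subset_span ⟨β, hUfin.mem_toFinset.mp hβ, rfl⟩)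
            set b' : Ω → R := fun δ => b δ + e δ * f δ' with hb'def
            have hsum3 : ∑ δ ∈ W', (e δ * f δ') * f δ
                = (∑ δ ∈ W', e δ * f δ) * f δ' := by
              rw [Finset.sum_mul]
              exact Finset.sum_congr rfl fun δ _ => by ring
            have hrepr : u + ∑ δ ∈ W, b δ * f δ = u' + ∑ δ ∈ W', b' δ * f δ := by
              have hD : ∑ δ ∈ W', b' δ * f δ = (∑ δ ∈ W', b δ * f δ) +
                  (∑ δ ∈ W', e δ * f δ) * f δ' := by
                rw [← hsum3, ← Finset.sum_add_distrib]
                exact Finset.sum_congr rfl fun δ _ => by rw [hb'def]; ring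
              rw [hsplit, hD, hu'def]
              rw [heeq2]
              ring
            have hb'prop : ∀ δ ∈ W', b' δ = 0 ∨ (deg δ ≤ d ∧ b' δ ∈ 𝒜 (d - deg δ)) := by
              intro δ hδ
              have hbp := hbprop δ (hW'sub δ hδ)
              rcases heprop δ with he0 | ⟨hed, hem⟩
              · rw [hb'def]
                simp only [he0, zero_mul, add_zero]
                exact hbp
              · have harith : (d - deg δ') - deg δ + deg δ' = d - deg δ := by omega
                have hmm : e δ * f δ' ∈ 𝒜 (d - deg δ) := by
                  have := SetLike.mul_mem_graded hem (hfd δ')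
                  rwa [harith] at this
                have hdled : deg δ ≤ d := by
                  have := hdeg δ'
                  omega
                rcases hbp with hb0 | ⟨_, hbm⟩
                · right
                  refine ⟨hdled, ?_⟩
                  rw [hb'def]
                  simpa [hb0] using hmm
                · right
                  exact ⟨hdled, AddSubmonoid.add_mem _ hbm hmm⟩
            rw [hrepr] at hmul ⊢
            exact ihk W' hW'card (fun δ hδ => hWlt δ (hW'sub δ hδ)) U hUfin hUlt
              (fun δ hδ => hWU δ (hW'sub δ hδ)) b' hb'prop u' hu' hmul
        · rw [Finset.not_nonempty_iff_eq_empty] at hWne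
          subst hWne
          simpa using (by simpa using hu : u ∈ Ideal.span (f '' U))
    -- now prove Q using inner
    intro U hUfin hUlt h hhd hmul
    have hJ : h ∈ Ideal.span (f '' {β | lt β γ}) :=
      hreg2 γ h (Ideal.span_mono (Set.image_mono fun β hβ => hUlt β hβ) hmul)
    obtain ⟨T, hTsub, hTmem⟩ := Submodule.mem_span_finite_of_mem_span hJ
    have hch : ∀ t : T, ∃ β, lt β γ ∧ f β = (t : R) := by
      intro t
      obtain ⟨β, hβ, hfe⟩ := hTsub t.2
      exact ⟨β, hβ, hfe⟩
    set V : Finset Ω := hUfin.toFinset ∪ T.attach.image (fun t => (hch t).choose) with hV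
    have hVlt : ∀ β ∈ V, lt β γ := by
      intro β hβ
      rcases Finset.mem_union.mp hβ with hβ | hβ
      · exact hUlt β (hUfin.mem_toFinset.mp hβ)
      · obtain ⟨t, _, rfl⟩ := Finset.mem_image.mp hβ
        exact (hch t).choose_spec.1
    have hhV : h ∈ Ideal.span (f '' ↑V) := by
      refine Submodule.span_le.mpr ?_ hTmem
      intro x hx
      obtain ⟨t, ht⟩ : ∃ t : T, (t : R) = x := ⟨⟨x, hx⟩, rfl⟩
      refine Ideal.subset_span ⟨(hch t).choose, ?_, by rw [(hch t).choose_spec.2, ht]⟩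
      exact Finset.mem_coe.mpr (Finset.mem_union_right _
        (Finset.mem_image.mpr ⟨t, Finset.mem_attach _ _, rfl⟩))
    obtain ⟨c, hcprop, hceq⟩ := frAux_coeffs_hom 𝒜 f deg hfd V hhd hhV
    have hUsubV : hUfin.toFinset ⊆ V := Finset.subset_union_left
    have hsplitV : ∑ β ∈ V, c β * f β
        = (∑ β ∈ V \ hUfin.toFinset, c β * f β) + ∑ β ∈ hUfin.toFinset, c β * f β :=
      (Finset.sum_sdiff hUsubV).symm
    have hueq : h = (∑ β ∈ hUfin.toFinset, c β * f β) + ∑ β ∈ V \ hUfin.toFinset, c β * f β := by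
      rw [hceq, hsplitV]
      ring
    have huu : (∑ β ∈ hUfin.toFinset, c β * f β) ∈ Ideal.span (f '' U) :=
      Ideal.sum_mem _ fun β hβ => Ideal.mul_mem_left _ _
        (Ideal.subset_span ⟨β, hUfin.mem_toFinset.mp hβ, rfl⟩)
    rw [hueq] at hmul ⊢
    exact inner (V \ hUfin.toFinset).card (V \ hUfin.toFinset) le_rfl
      (fun δ hδ => hVlt δ (Finset.mem_sdiff.mp hδ).1) U hUfin hUlt
      (fun δ hδ => fun hδU => (Finset.mem_sdiff.mp hδ).2 (hUfin.mem_toFinset.mpr hδU))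
      c (fun δ _ => hcprop δ) _ huu hmul
  -- general h from homogeneous components
  intro U hUfin hUlt h hmul
  have hIhom : (Ideal.span (f '' U)).IsHomogeneous 𝒜 :=
    frAux_span_homog 𝒜 f (fun β => ⟨deg β, hfd β⟩) U
  rw [← DirectSum.sum_support_decompose 𝒜 h]
  exact Ideal.sum_mem _ fun n _ => Q n U hUfin hUlt _ (SetLike.coe_mem _)
    (frAux_comp_mul_mem 𝒜 hIhom (hfd γ) hmul n)

end Aux


/-- Proposition 1.20: in a non-negatively graded commutative ring, a regular sequence of
homogeneous elements of positive degree satisfies the FR-condition. -/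
theorem satisfiesFR_of_isRegularSeq {R : Type*} [CommRing R]
    (𝒜 : ℕ → AddSubmonoid R) [GradedRing 𝒜]
    {Ω : Type*} (lt : Ω → Ω → Prop) (hwo : IsWellOrder Ω lt)
    (f : Ω → R) (hhom : ∀ α, ∃ n, 0 < n ∧ f α ∈ 𝒜 n)
    (hreg : IsRegularSeq lt f) : SatisfiesFR lt f := by
  classical
  choose deg hdegpos hfdeg using hhom
  intro n α hα
  constructor
  · intro htop
    apply hreg.1
    have hsub : Set.range (fun i => f (α i)) ⊆ Set.range f := by
      rintro x ⟨i, rfl⟩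
      exact ⟨α i, rfl⟩
    exact top_unique (htop ▸ Ideal.span_mono hsub)
  · intro i h hmem
    have himg : (fun j => f (α j)) '' {β | β < i} = f '' (α '' {β | β < i}) := by
      rw [← Set.image_comp]
      rfl
    have hfin : (α '' {β | β < i}).Finite := Set.toFinite _
    have hlt : ∀ β ∈ α '' {j | j < i}, lt β (α i) := by
      rintro β ⟨j, hj, rfl⟩
      exact hα j i hj
    have := frAux_main 𝒜 lt hwo f deg hdegpos hfdeg hreg.2 (α i) (α '' {j | j < i})
      hfin hlt h (by rwa [himg] at hmem)
    rwa [himg]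

end
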